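/- The sixteen matrices M_{a⊗b}, as a and b each range over {1, i, j, k} ⊂ ℍ, form a basis of the real vector space M(4, ℝ) of 4×4 real matrices. -/

import Mathlib

open Matrix

/-- The quaternion units. -/
def qi : Quaternion ℝ := ⟨0, 1, 0, 0⟩
def qj : Quaternion ℝ := ⟨0, 0, 1, 0⟩
def qk : Quaternion ℝ := ⟨0, 0, 0, 1⟩

/-- Coordinates of a quaternion in the basis `{1, i, j, k}` of `ℍ ≅ ℝ⁴`. -/
def qcoord (x : Quaternion ℝ) : Fin 4 → ℝ := ![x.re, x.imI, x.imJ, x.imK]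

/-- The basis `{1, i, j, k}` of `ℍ ≅ ℝ⁴`. -/
noncomputable def qbas : Fin 4 → Quaternion ℝ := ![1, qi, qj, qk]

/-- `M_{p⊗q}` : the matrix of the ℝ-linear map `x ↦ p * x * conj q` on `ℍ ≅ ℝ⁴`
in the basis `{1, i, j, k}`. -/
noncomputable def Mten (p q : Quaternion ℝ) : Matrix (Fin 4) (Fin 4) ℝ :=
  Matrix.of fun i j => qcoord (p * qbas j * star q) i

def L : Fin 4 → Fin 4 → Fin 4 → Fin 4 → ℤ :=
  ![![
    ![![1, 0, 0, 0], ![0, 1, 0, 0], ![0, 0, 1, 0], ![0, 0, 0, 1]],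
    ![![0, 1, 0, 0], ![-1, 0, 0, 0], ![0, 0, 0, -1], ![0, 0, 1, 0]],
    ![![0, 0, 1, 0], ![0, 0, 0, 1], ![-1, 0, 0, 0], ![0, -1, 0, 0]],
    ![![0, 0, 0, 1], ![0, 0, -1, 0], ![0, 1, 0, 0], ![-1, 0, 0, 0]]],
  ![
    ![![0, -1, 0, 0], ![1, 0, 0, 0], ![0, 0, 0, -1], ![0, 0, 1, 0]],
    ![![1, 0, 0, 0], ![0, 1, 0, 0], ![0, 0, -1, 0], ![0, 0, 0, -1]],
    ![![0, 0, 0, -1], ![0, 0, 1, 0], ![0, 1, 0, 0], ![-1, 0, 0, 0]],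
    ![![0, 0, 1, 0], ![0, 0, 0, 1], ![1, 0, 0, 0], ![0, 1, 0, 0]]],
  ![
    ![![0, 0, -1, 0], ![0, 0, 0, 1], ![1, 0, 0, 0], ![0, -1, 0, 0]],
    ![![0, 0, 0, 1], ![0, 0, 1, 0], ![0, 1, 0, 0], ![1, 0, 0, 0]],
    ![![1, 0, 0, 0], ![0, -1, 0, 0], ![0, 0, 1, 0], ![0, 0, 0, -1]],
    ![![0, -1, 0, 0], ![-1, 0, 0, 0], ![0, 0, 0, 1], ![0, 0, 1, 0]]],
  ![
    ![![0, 0, 0, -1], ![0, 0, -1, 0], ![0, 1, 0, 0], ![1, 0, 0, 0]],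
    ![![0, 0, -1, 0], ![0, 0, 0, 1], ![-1, 0, 0, 0], ![0, 1, 0, 0]],
    ![![0, 1, 0, 0], ![1, 0, 0, 0], ![0, 0, 0, 1], ![0, 0, 1, 0]],
    ![![1, 0, 0, 0], ![0, -1, 0, 0], ![0, 0, -1, 0], ![0, 0, 0, 1]]]]

/-- The 16×16 integer matrix of coordinates of the sixteen matrices `M_{a⊗b}`. -/
def Bz : Matrix (Fin 4 × Fin 4) (Fin 4 × Fin 4) ℤ :=
  Matrix.of fun ab ij => L ab.1 ab.2 ij.1 ij.2

lemma hBz : Bz * Bzᵀ = Matrix.diagonal fun _ => (4 : ℤ) := by decide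

/-- The same coordinate matrix over ℝ. -/
noncomputable def Br : Matrix (Fin 4 × Fin 4) (Fin 4 × Fin 4) ℝ :=
  Bz.map (Int.cast : ℤ → ℝ)

lemma hBr : Br * Brᵀ = Matrix.diagonal fun _ => (4 : ℝ) := by
  have h : (Bz * Bzᵀ).map ⇑(Int.castRingHom ℝ) =
      (Matrix.diagonal fun _ => (4 : ℤ)).map ⇑(Int.castRingHom ℝ) := by rw [hBz]
  rw [Matrix.map_mul, Matrix.diagonal_map (by simp)] at h
  simpa [Br, ← Matrix.transpose_map] using h

lemma hBrInv : Br * ((4 : ℝ)⁻¹ • Brᵀ) = 1 := by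
  rw [Matrix.mul_smul, hBr]
  ext i j
  rcases eq_or_ne i j with h | h <;>
    simp [Matrix.smul_apply, Matrix.diagonal_apply, Matrix.one_apply, h]

lemma hUnit : IsUnit Br :=
  have := invertibleOfRightInverse Br ((4 : ℝ)⁻¹ • Brᵀ) hBrInv
  isUnit_of_invertible Br

lemma h4 (P : Fin 4 → Prop) (h0 : P 0) (h1 : P 1) (h2 : P 2) (h3 : P 3) : ∀ i, P i := by
  intro i
  match i with
  | 0 => exact h0
  | 1 => exact h1
  | 2 => exact h2
  | 3 => exact h3

lemma qi_re : qi.re = 0 := rfl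
lemma qi_imI : qi.imI = 1 := rfl
lemma qi_imJ : qi.imJ = 0 := rfl
lemma qi_imK : qi.imK = 0 := rfl
lemma qj_re : qj.re = 0 := rfl
lemma qj_imI : qj.imI = 0 := rfl
lemma qj_imJ : qj.imJ = 1 := rfl
lemma qj_imK : qj.imK = 0 := rfl
lemma qk_re : qk.re = 0 := rfl
lemma qk_imI : qk.imI = 0 := rfl
lemma qk_imJ : qk.imJ = 0 := rfl
lemma qk_imK : qk.imK = 1 := rfl

set_option maxHeartbeats 4000000 in
lemma key : ∀ a b i j : Fin 4, Mten (qbas a) (qbas b) i j = (L a b i j : ℝ) := by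
  refine h4 _ ?_ ?_ ?_ ?_ <;> refine h4 _ ?_ ?_ ?_ ?_ <;> refine h4 _ ?_ ?_ ?_ ?_ <;>
    refine h4 _ ?_ ?_ ?_ ?_ <;>
    dsimp only [Mten, qbas, qcoord, L, Matrix.of_apply, Matrix.cons_val] <;>
    norm_num [Quaternion.re_one, Quaternion.imI_one, Quaternion.imJ_one, Quaternion.imK_one,
      qi_re, qi_imI, qi_imJ, qi_imK, qj_re, qj_imI, qj_imJ, qj_imK, qk_re, qk_imI, qk_imJ, qk_imK,
      Quaternion.re_mul, Quaternion.imI_mul, Quaternion.imJ_mul, Quaternion.imK_mul,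
      Matrix.cons_val_zero, Matrix.cons_val_one, Matrix.cons_val_two, Matrix.cons_val_three,
      Matrix.head_cons, Matrix.vecHead, Matrix.vecTail]

/-- Flattening a 4×4 matrix to a function on pairs, as a linear map. -/
def flatten : Matrix (Fin 4) (Fin 4) ℝ →ₗ[ℝ] (Fin 4 × Fin 4 → ℝ) where
  toFun M := fun ij => M ij.1 ij.2
  map_add' _ _ := rfl
  map_smul' _ _ := rfl

lemma hcomp :
    (⇑flatten ∘ fun ab : Fin 4 × Fin 4 => Mten (qbas ab.1) (qbas ab.2)) = fun ab => Br ab := by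
  funext ab ij
  exact key ab.1 ab.2 ij.1 ij.2

lemma Mten_li :
    LinearIndependent ℝ (fun ab : Fin 4 × Fin 4 => Mten (qbas ab.1) (qbas ab.2)) := by
  apply LinearIndependent.of_comp flatten
  rw [hcomp]
  exact Matrix.linearIndependent_rows_iff_isUnit.2 hUnit

/-- The sixteen matrices `M_{a⊗b}`, `a, b ∈ {1, i, j, k}`, form a basis of the
real vector space of `4 × 4` real matrices. -/
theorem Mten_basis :
    LinearIndependent ℝ (fun ab : Fin 4 × Fin 4 => Mten (qbas ab.1) (qbas ab.2)) ∧
    Submodule.span ℝ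
      (Set.range fun ab : Fin 4 × Fin 4 => Mten (qbas ab.1) (qbas ab.2)) = ⊤ := by
  refine ⟨Mten_li, Mten_li.span_eq_top_of_card_eq_finrank ?_⟩
  simp [Module.finrank_matrix]
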